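/- (Hamiltonian characterisation of unitary groups) Let U : ℝ → Matrix (Fin n) (Fin n) ℂ with U(0) = 1. Then U is a continuous one-parameter unitary group (U is continuous, U(θ)·U(θ') = U(θ + θ') for all θ, θ', and every U(θ) is unitary) if and only if there exists a constant Hermitian matrix H such that U satisfies the differential equation ∂U = i·H·U, i.e. HasDerivAt U ((I • H) * U(θ)) θ for every θ ∈ ℝ. -/

import Mathlib

open Filter Topology NormedSpace intervalIntegral MeasureTheory

section auxsection

attribute [local instance] Matrix.linftyOpNormedRing Matrix.linftyOpNormedAlgebra

variable {n : ℕ}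

noncomputable def ctCLM (n : ℕ) : Matrix (Fin n) (Fin n) ℂ →L[ℝ] Matrix (Fin n) (Fin n) ℂ :=
  LinearMap.toContinuousLinearMap
    { toFun := fun B => star B
      map_add' := fun B C => star_add B C
      map_smul' := fun r B => by simp [star_smul] }

theorem ctCLM_apply (B : Matrix (Fin n) (Fin n) ℂ) : ctCLM n B = star B := rfl

theorem aux_star_deriv (U : ℝ → Matrix (Fin n) (Fin n) ℂ) (A : Matrix (Fin n) (Fin n) ℂ)
    (θ : ℝ) (h : HasDerivAt U (A * U θ) θ) :
    HasDerivAt (fun t => star (U t)) (star (U θ) * star A) θ := by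
  have := (ctCLM n).hasFDerivAt.comp_hasDerivAt θ h
  rw [show star (U θ) * star A = ctCLM n (A * U θ) by simp [ctCLM_apply, star_mul]]
  exact this

theorem aux_unitary (U : ℝ → Matrix (Fin n) (Fin n) ℂ) (hU0 : U 0 = 1)
    (A : Matrix (Fin n) (Fin n) ℂ) (hstarA : star A = -A)
    (hUd : ∀ θ : ℝ, HasDerivAt U (A * U θ) θ) (θ : ℝ) :
    U θ ∈ Matrix.unitaryGroup (Fin n) ℂ := by
  have hfd : ∀ t : ℝ, HasDerivAt (fun t => star (U t) * U t) 0 t := by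
    intro t
    have h1 := (aux_star_deriv U A t (hUd t)).mul (hUd t)
    refine h1.congr_deriv ?_
    rw [hstarA]
    rw [← Matrix.mul_assoc]
    simp [Matrix.mul_assoc]
  have hconst : star (U θ) * U θ = star (U 0) * U 0 :=
    is_const_of_deriv_eq_zero (fun x => (hfd x).differentiableAt)
      (fun x => (hfd x).deriv) θ 0
  have h1 : star (U θ) * U θ = 1 := by
    rw [hconst, hU0]; simp
  rw [Matrix.mem_unitaryGroup_iff']
  exact h1

theorem aux_backward (U : ℝ → Matrix (Fin n) (Fin n) ℂ) (hU0 : U 0 = 1)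
    (H : Matrix (Fin n) (Fin n) ℂ) (hH : H.conjTranspose = H)
    (hder : ∀ θ : ℝ, Tendsto (slope U θ) (𝓝[≠] θ) (𝓝 ((Complex.I • H) * U θ))) :
    Continuous U ∧ (∀ θ θ' : ℝ, U θ * U θ' = U (θ + θ')) ∧
      ∀ θ : ℝ, U θ ∈ Matrix.unitaryGroup (Fin n) ℂ := by
  set A := Complex.I • H with hA
  have hUd : ∀ θ, HasDerivAt U (A * U θ) θ := fun θ =>
    hasDerivAt_iff_tendsto_slope.mpr (hder θ)
  have hstarA : star A = -A := by
    show (Complex.I • H).conjTranspose = -(Complex.I • H)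
    rw [Matrix.conjTranspose_smul, hH, Complex.star_def, Complex.conj_I, neg_smul]
  have hcomm : ∀ c : ℝ, Commute A (exp (c • A)) := fun c =>
    ((Commute.refl A).smul_right c).exp_right
  have hE : ∀ θ : ℝ, HasDerivAt (fun t : ℝ => exp (t • A)) (A * exp (θ • A)) θ :=
    fun θ => hasDerivAt_exp_smul_const' A θ
  have hEadd : ∀ a b : ℝ, exp (a • A) * exp (b • A) = exp ((a + b) • A) := by
    intro a b
    rw [add_smul]
    exact (exp_add_of_commute (((Commute.refl A).smul_left a).smul_right b)).symm
  have hW : ∀ θ : ℝ, exp ((-θ) • A) * U θ = 1 := by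
    have hWd : ∀ θ : ℝ, HasDerivAt (fun t : ℝ => exp ((-t) • A) * U t) 0 θ := by
      intro θ
      have h1 : HasDerivAt (fun t : ℝ => exp ((-t) • A)) (-(A * exp ((-θ) • A))) θ := by
        have := (hE (-θ)).scomp θ (hasDerivAt_neg θ)
        rw [neg_one_smul] at this
        exact this
      have h2 := h1.mul (hUd θ)
      refine h2.congr_deriv ?_
      have h3 : exp ((-θ) • A) * (A * U θ) = A * exp ((-θ) • A) * U θ := by
        rw [← Matrix.mul_assoc, ← (hcomm (-θ)).eq]
      rw [h3]
      simp
    intro θ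
    have hconst : exp ((-θ) • A) * U θ = exp ((-(0:ℝ)) • A) * U 0 :=
      is_const_of_deriv_eq_zero (fun x => (hWd x).differentiableAt)
        (fun x => (hWd x).deriv) θ 0
    rw [hconst, hU0]
    simp [exp_zero]
  have hUE : ∀ θ : ℝ, U θ = exp (θ • A) := by
    intro θ
    have h1 : exp (θ • A) * exp ((-θ) • A) = 1 := by
      rw [hEadd, add_neg_cancel, zero_smul, exp_zero]
    calc U θ = (exp (θ • A) * exp ((-θ) • A)) * U θ := by rw [h1, Matrix.one_mul]
    _ = exp (θ • A) * (exp ((-θ) • A) * U θ) := by rw [Matrix.mul_assoc]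
    _ = exp (θ • A) := by rw [hW, Matrix.mul_one]
  refine ⟨?_, ?_, ?_⟩
  · exact continuous_iff_continuousAt.mpr fun θ => (hUd θ).continuousAt
  · intro θ θ'; rw [hUE, hUE, hUE, hEadd]
  · exact fun θ => aux_unitary U hU0 A hstarA hUd θ

theorem aux_forward (U : ℝ → Matrix (Fin n) (Fin n) ℂ) (hU0 : U 0 = 1)
    (hcont : Continuous U) (hmul : ∀ θ θ' : ℝ, U θ * U θ' = U (θ + θ'))
    (hunit : ∀ θ : ℝ, U θ ∈ Matrix.unitaryGroup (Fin n) ℂ) :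
    ∃ H : Matrix (Fin n) (Fin n) ℂ, H.conjTranspose = H ∧
      ∀ θ : ℝ, Tendsto (slope U θ) (𝓝[≠] θ) (𝓝 ((Complex.I • H) * U θ)) := by
  classical
  set g : ℝ → Matrix (Fin n) (Fin n) ℂ := fun x => ∫ s in (0:ℝ)..x, U s with hg
  have hgd : ∀ x : ℝ, HasDerivAt g (U x) x := fun x =>
    (hcont.integral_hasStrictDerivAt 0 x).hasDerivAt
  have hg0 : g 0 = 0 := intervalIntegral.integral_same
  have hslope0 : Tendsto (fun ε => slope g 0 ε) (𝓝[≠] (0:ℝ)) (𝓝 1) := by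
    have := hasDerivAt_iff_tendsto_slope.mp (hgd 0)
    rwa [hU0] at this
  have hdet : Tendsto (fun ε => (slope g 0 ε).det) (𝓝[≠] (0:ℝ)) (𝓝 1) := by
    have hc : Continuous fun M : Matrix (Fin n) (Fin n) ℂ => M.det :=
      Continuous.matrix_det continuous_id
    have := (hc.continuousAt (x := (1 : Matrix (Fin n) (Fin n) ℂ))).tendsto.comp hslope0
    simp at this
    exact this
  have hev : ∀ᶠ ε in 𝓝[≠] (0:ℝ), (slope g 0 ε).det ≠ 0 := hdet.eventually_ne one_ne_zero
  obtain ⟨ε, hεdet, hε0⟩ := (hev.and self_mem_nhdsWithin).exists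
  set V := g ε with hV
  have hVdet : IsUnit V.det := by
    have hsl : slope g 0 ε = (ε⁻¹ : ℝ) • V := by
      rw [slope_def_module, hg0, sub_zero, sub_zero]
    rw [hsl, show ((ε⁻¹ : ℝ) • V) = (((ε⁻¹ : ℝ) : ℂ) • V) from (algebraMap_smul ℂ _ _).symm,
      Matrix.det_smul] at hεdet
    exact isUnit_iff_ne_zero.mpr (right_ne_zero_of_mul hεdet)
  set W := V⁻¹ with hWdef
  have hWV : W * V = 1 := Matrix.nonsing_inv_mul V hVdet
  have hUint : ∀ a b : ℝ, @IntervalIntegrable _ _ NormedAddCommGroup.toENormedAddCommMonoid.toENormedAddMonoid U volume a b := fun a b =>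
    hcont.intervalIntegrable a b
  have key : ∀ θ : ℝ, g (θ + ε) - g θ = V * U θ := by
    intro θ
    have h1 : g (θ + ε) - g θ = ∫ s in θ..θ+ε, U s :=
      intervalIntegral.integral_interval_sub_left (hUint 0 (θ+ε)) (hUint 0 θ)
    have h2 : (∫ s in θ..θ+ε, U s) = ∫ s in (0:ℝ)..ε, U (s + θ) := by
      rw [intervalIntegral.integral_comp_add_right, zero_add, add_comm ε θ]
    have h3 : (∫ s in (0:ℝ)..ε, U (s + θ)) = ∫ s in (0:ℝ)..ε, U s * U θ := by
      refine intervalIntegral.integral_congr fun s _ => ?_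
      rw [hmul s θ]
    have h4 : (∫ s in (0:ℝ)..ε, U s * U θ) = V * U θ := by
      have := (LinearMap.toContinuousLinearMap (LinearMap.mulRight ℝ (U θ))).intervalIntegral_comp_comm (hUint 0 ε)
      exact this
    rw [h1, h2, h3, h4]
  have hUeq : U = fun θ => W * (g (θ + ε) - g θ) := by
    funext θ
    rw [key θ, ← Matrix.mul_assoc, hWV, Matrix.one_mul]
  set A : Matrix (Fin n) (Fin n) ℂ := W * (U ε - 1) with hAdef
  have hUderiv : ∀ θ : ℝ, HasDerivAt U (A * U θ) θ := by
    intro θ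
    have h1 : HasDerivAt (fun x : ℝ => g (x + ε)) (U (θ + ε)) θ := by
      have := (hgd (θ + ε)).scomp θ ((hasDerivAt_id θ).add_const ε)
      simp at this
      exact this
    have h2 : HasDerivAt (fun x : ℝ => W * (g (x + ε) - g x)) (W * (U (θ + ε) - U θ)) θ :=
      (h1.sub (hgd θ)).const_mul W
    have h3 : W * (U (θ + ε) - U θ) = A * U θ := by
      rw [show U (θ + ε) = U ε * U θ by rw [hmul, add_comm], hAdef,
        Matrix.mul_assoc, Matrix.sub_mul, Matrix.one_mul]
    rw [h3] at h2
    exact h2.congr_of_eventuallyEq (Filter.Eventually.of_forall fun x => congrFun hUeq x)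
  have hstarfun : (fun θ : ℝ => star (U θ)) = fun θ : ℝ => U (-θ) := by
    funext θ
    have h1 : star (U θ) * U θ = 1 := (Matrix.mem_unitaryGroup_iff'.mp (hunit θ))
    have h2 : U θ * U (-θ) = 1 := by rw [hmul, add_neg_cancel, hU0]
    calc star (U θ) = star (U θ) * (U θ * U (-θ)) := by rw [h2, Matrix.mul_one]
    _ = (star (U θ) * U θ) * U (-θ) := by rw [Matrix.mul_assoc]
    _ = U (-θ) := by rw [h1, Matrix.one_mul]
  have hd1 : HasDerivAt (fun θ : ℝ => star (U θ)) (star A) 0 := by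
    have := aux_star_deriv U A 0 (hUderiv 0)
    simpa [hU0, star_mul] using this
  have hd2 : HasDerivAt (fun θ : ℝ => U (-θ)) (-A) 0 := by
    have := (hUderiv (-(0:ℝ))).scomp (0:ℝ) (hasDerivAt_neg (0:ℝ))
    simp [hU0] at this
    exact this
  have hstarA : star A = -A := by
    have h := hd1
    rw [hstarfun] at h
    exact h.unique hd2
  refine ⟨(-Complex.I) • A, ?_, ?_⟩
  · show ((-Complex.I) • A).conjTranspose = (-Complex.I) • A
    rw [Matrix.conjTranspose_smul]
    have : star A = -A := hstarA
    rw [show (A.conjTranspose) = -A from this]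
    simp [Complex.conj_I]
  · intro θ
    have hAeq : (Complex.I • ((-Complex.I) • A)) = A := by
      rw [smul_smul]
      norm_num [Complex.I_mul_I]
    rw [hAeq]
    exact hasDerivAt_iff_tendsto_slope.mp (hUderiv θ)

end auxsection

open scoped Matrix

attribute [local instance] Matrix.normedAddCommGroup Matrix.normedSpace

/-- Hamiltonian characterisation of unitary groups: a map `U : ℝ → Matrix (Fin n) (Fin n) ℂ`
with `U(0) = 1` is a continuous one-parameter unitary group if and only if there is a
constant Hermitian matrix `H` such that `U` satisfies the differential equation
`∂U = i·H·U`, i.e. `HasDerivAt U ((I • H) * U θ) θ` for every `θ`. -/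
theorem stmt_16 {n : ℕ} (U : ℝ → Matrix (Fin n) (Fin n) ℂ) (hU0 : U 0 = 1) :
    (Continuous U ∧ (∀ θ θ' : ℝ, U θ * U θ' = U (θ + θ')) ∧
      (∀ θ : ℝ, U θ ∈ Matrix.unitaryGroup (Fin n) ℂ)) ↔
    (∃ H : Matrix (Fin n) (Fin n) ℂ, H.conjTranspose = H ∧
      ∀ θ : ℝ, HasDerivAt U ((Complex.I • H) * U θ) θ) := by
  constructor
  · rintro ⟨h1, h2, h3⟩
    obtain ⟨H, hH, hslope⟩ := aux_forward U hU0 h1 h2 h3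
    exact ⟨H, hH, fun θ => hasDerivAt_iff_tendsto_slope.mpr (hslope θ)⟩
  · rintro ⟨H, hH, hder⟩
    exact aux_backward U hU0 H hH fun θ => hasDerivAt_iff_tendsto_slope.mp (hder θ)
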